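/- Let d ≥ 3 and fix 0 < ε < 1 < M and an integer m ≥ 1. ℙ-almost surely, for all n large enough: for every integer i with 0 ≤ i ≤ i_max(n), where i_max(n) is the smallest integer with 2^{i} ν(n) ≥ ι(n), and every x ∈ 𝔻(n), the number of sites of T_ε^M(n) in the cube B_x(2^i ν(n)) of side 2^i ν(n) centered at x is at most n · max(1, 2^{id} ν(n)^d g(n)^{−α}). -/

import Mathlib

open MeasureTheory ProbabilityTheory Filter Set
open scoped ENNReal NNReal

/-- Euclidean norm of a point of `ℤ^d`. -/
noncomputable def znorm {d : ℕ} (x : Fin d → ℤ) : ℝ :=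
  Real.sqrt (∑ i, ((x i : ℝ)) ^ 2)

/-- The unit step of the simple random walk indexed by a coordinate and a sign. -/
def stepVec (d : ℕ) (p : Fin d × Bool) : Fin d → ℤ :=
  fun j => if j = p.1 then (if p.2 then 1 else -1) else 0

/-- `Y` is a simple random walk on `ℤ^d` started at `0` under `P`. -/
structure IsSRW {Ω : Type*} [MeasurableSpace Ω] (P : Measure Ω) (d : ℕ)
    (Y : ℕ → Ω → (Fin d → ℤ)) : Prop where
  meas : ∀ k, Measurable (Y k)
  init : ∀ ω, Y 0 ω = 0
  indep : iIndepFun (fun k ω => Y (k + 1) ω - Y k ω) P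
  step : ∀ k p, P {ω | Y (k + 1) ω - Y k ω = stepVec d p} = (2 * d : ℝ≥0∞)⁻¹

/-- i.i.d. heavy-tailed random environment on `ℤ^d`. -/
structure IsEnv {Ω : Type*} [MeasurableSpace Ω] (P : Measure Ω) (d : ℕ) (α : ℝ)
    (L : ℝ → ℝ) (τ : (Fin d → ℤ) → Ω → ℝ) : Prop where
  meas : ∀ x, Measurable (τ x)
  pos : ∀ x ω, 0 < τ x ω
  indep : iIndepFun τ P
  tail : ∀ x u, (1 : ℝ) ≤ u → P {ω | u ≤ τ x ω} = ENNReal.ofReal (u ^ (-α) * (1 + L u))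
  decay : Tendsto L atTop (nhds 0)

noncomputable def gscale (α : ℝ) (n : ℕ) : ℝ := (2 : ℝ) ^ ((n : ℝ) / α)
noncomputable def rscale (n : ℕ) : ℝ := (2 : ℝ) ^ ((n : ℝ) / 2)
noncomputable def rhoscale (d n : ℕ) : ℝ := (2 : ℝ) ^ ((1 - 1 / (3 * (d : ℝ))) * n / 2)
noncomputable def nuscale (d n : ℕ) : ℝ := (2 : ℝ) ^ ((1 / (d : ℝ)) * n / 2)
noncomputable def iotascale (d n : ℕ) : ℝ := (2 : ℝ) ^ ((1 - 2 / (3 * (d : ℝ))) * n / 2)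
noncomputable def hscale (d n : ℕ) : ℝ := rscale n / rhoscale d n

/-- the big ball `𝔻(n)` of radius `m · r(n)`. -/
def bigD (d m n : ℕ) : Set (Fin d → ℤ) := {x | znorm x ≤ m * rscale n}

/-- the cube of side `ℓ` centered at `x`. -/
def cube {d : ℕ} (x : Fin d → ℤ) (ℓ : ℝ) : Set (Fin d → ℤ) :=
  {y | ∀ i, |((y i : ℝ)) - ((x i : ℝ))| ≤ ℓ / 2}

/-- the set of deep traps `T_ε^M(n)`. -/
noncomputable def traps {Ω : Type*} {d : ℕ} (τ : (Fin d → ℤ) → Ω → ℝ) (α : ℝ) (m : ℕ)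
    (ε M : ℝ) (n : ℕ) (ω : Ω) : Set (Fin d → ℤ) :=
  {x ∈ bigD d m n | ε * gscale α n ≤ τ x ω ∧ τ x ω < M * gscale α n}

/-- the set `ℰ(n)` of sites far from all deep traps. -/
noncomputable def calE {Ω : Type*} {d : ℕ} (τ : (Fin d → ℤ) → Ω → ℝ) (α : ℝ) (m : ℕ)
    (ε M : ℝ) (n : ℕ) (ω : Ω) : Set (Fin d → ℤ) :=
  {x ∈ bigD d m n | ∀ y ∈ traps τ α m ε M n ω, nuscale d n < znorm (x - y)}

/-- the set `ℰ₀(n)` of sites of `ℰ(n)` far from the boundary of `𝔻(n)`. -/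
noncomputable def calE₀ {Ω : Type*} {d : ℕ} (τ : (Fin d → ℤ) → Ω → ℝ) (α : ℝ) (m : ℕ)
    (ε M : ℝ) (n : ℕ) (ω : Ω) : Set (Fin d → ℤ) :=
  {x ∈ calE τ α m ε M n ω | ∀ y, y ∉ bigD d m n → rhoscale d n < znorm (x - y)}


/-- the smallest integer `i` with `2^i ν(n) ≥ ι(n)`. -/
noncomputable def imax (d n : ℕ) : ℕ := sInf {i : ℕ | iotascale d n ≤ 2 ^ i * nuscale d n}



lemma aux_pow_le_exp_factorial (k : ℕ) : (k:ℝ)^k ≤ Real.exp k * k.factorial := by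
  have h := Real.pow_div_factorial_le_exp (x := (k:ℝ)) (Nat.cast_nonneg k) k
  have hk : (0:ℝ) < k.factorial := by exact_mod_cast k.factorial_pos
  rw [div_le_iff₀ hk] at h
  linarith [h]

lemma aux_choose (N k : ℕ) : (N.choose k : ℝ) * (k.factorial : ℝ) ≤ (N:ℝ)^k := by
  have h : N.choose k * k.factorial ≤ N ^ k := by
    calc N.choose k * k.factorial ≤ N.descFactorial k := by
          rw [Nat.descFactorial_eq_factorial_mul_choose, Nat.mul_comm]
      _ ≤ N ^ k := Nat.descFactorial_le_pow N k
  exact_mod_cast h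


lemma count_tail {Ω : Type*} [MeasurableSpace Ω] (P : Measure Ω) {ι : Type*}
    (τ : ι → Ω → ℝ) (hind : iIndepFun τ P)
    (F : Finset ι) (u : ℝ) (k : ℕ) (T : Ω → Set ι)
    (hT : ∀ ω, T ω ⊆ ↑F) (hTu : ∀ ω y, y ∈ T ω → u ≤ τ y ω)
    (p : ℝ≥0∞) (hp : ∀ y, P {ω | u ≤ τ y ω} ≤ p) :
    P {ω | k ≤ (T ω).ncard} ≤ (F.card.choose k) * p ^ k := by
  have hsub : {ω | k ≤ (T ω).ncard} ⊆
      ⋃ s ∈ F.powersetCard k, ⋂ y ∈ s, {ω | u ≤ τ y ω} := by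
    intro ω hω
    obtain ⟨t, htsub, htcard⟩ := Set.exists_subset_card_eq hω
    have htfin : t.Finite := (F.finite_toSet.subset (htsub.trans (hT ω)))
    refine Set.mem_iUnion₂.mpr ⟨htfin.toFinset, ?_, ?_⟩
    · rw [Finset.mem_powersetCard]
      refine ⟨?_, ?_⟩
      · intro y hy
        exact hT ω (htsub (htfin.mem_toFinset.mp hy))
      · rw [← htcard]; exact (Set.ncard_eq_toFinset_card _ htfin).symm
    · refine Set.mem_iInter₂.mpr fun y hy => ?_
      exact hTu ω y (htsub (htfin.mem_toFinset.mp hy))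
  calc P {ω | k ≤ (T ω).ncard} ≤ ∑ s ∈ F.powersetCard k, P (⋂ y ∈ s, {ω | u ≤ τ y ω}) :=
        le_trans (measure_mono hsub) (measure_biUnion_finset_le _ _)
    _ ≤ ∑ s ∈ F.powersetCard k, p ^ k := by
        refine Finset.sum_le_sum fun s hs => ?_
        have hcard : s.card = k := (Finset.mem_powersetCard.mp hs).2
        have heq : P (⋂ y ∈ s, {ω | u ≤ τ y ω}) = ∏ y ∈ s, P {ω | u ≤ τ y ω} := by
          refine hind.meas_biInter fun y _ => ?_
          exact ⟨Set.Ici u, measurableSet_Ici, rfl⟩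
        rw [heq, ← hcard]
        exact Finset.prod_le_pow_card _ _ _ fun y _ => hp y
    _ = (F.card.choose k) * p ^ k := by
        rw [Finset.sum_const, Finset.card_powersetCard, nsmul_eq_mul]

lemma two_rpow_nonneg (e : ℝ) : (0:ℝ) ≤ (2:ℝ) ^ e := (Real.rpow_pos_of_pos two_pos e).le

lemma one_le_two_rpow {e : ℝ} (he : 0 ≤ e) : (1:ℝ) ≤ (2:ℝ) ^ e := by
  calc (1:ℝ) = (2:ℝ) ^ (0:ℝ) := (Real.rpow_zero 2).symm
    _ ≤ (2:ℝ) ^ e := Real.rpow_le_rpow_of_exponent_le one_le_two he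

lemma nuscale_ge_one (d n : ℕ) : (1:ℝ) ≤ nuscale d n := by
  apply one_le_two_rpow
  have : (0:ℝ) ≤ 1 / (d:ℝ) := by positivity
  positivity

lemma imax_le (d n : ℕ) (hd : 3 ≤ d) : imax d n ≤ n := by
  apply Nat.sInf_le
  have hd0 : (0:ℝ) < (d:ℝ) := by exact_mod_cast Nat.lt_of_lt_of_le (by norm_num) hd
  have h1 : iotascale d n ≤ (2:ℝ) ^ (n:ℝ) := by
    apply Real.rpow_le_rpow_of_exponent_le one_le_two
    have h2 : (1 - 2 / (3 * (d:ℝ))) ≤ 2 := by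
      have : 0 ≤ 2 / (3 * (d:ℝ)) := by positivity
      linarith
    nlinarith [Nat.cast_nonneg (α := ℝ) n]
  have h2 : (2:ℝ) ^ (n:ℝ) = (2:ℝ) ^ n := Real.rpow_natCast 2 n
  have h3 : ((2:ℝ) ^ n) ≤ 2 ^ n * nuscale d n :=
    le_mul_of_one_le_right (by positivity) (nuscale_ge_one d n)
  show iotascale d n ≤ _
  calc iotascale d n ≤ (2:ℝ)^(n:ℝ) := h1
    _ = (2:ℝ)^n := h2
    _ ≤ _ := h3

lemma coord_le_znorm {d : ℕ} (x : Fin d → ℤ) (j : Fin d) : |((x j : ℝ))| ≤ znorm x := by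
  rw [znorm, ← Real.sqrt_sq_eq_abs]
  apply Real.sqrt_le_sqrt
  exact Finset.single_le_sum (f := fun i => ((x i:ℝ))^2) (fun i _ => sq_nonneg _) (Finset.mem_univ j)

lemma nat_le_gscale {α : ℝ} (hα0 : 0 < α) (hα1 : α < 1) (n : ℕ) : (n:ℝ) ≤ gscale α n := by
  have h1 : (n:ℝ) ≤ (n:ℝ)/α := by
    rw [le_div_iff₀ hα0]; nlinarith [Nat.cast_nonneg (α := ℝ) n]
  calc (n:ℝ) ≤ 2^n := by exact_mod_cast (Nat.lt_two_pow_self (n := n)).le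
    _ = (2:ℝ)^(n:ℝ) := (Real.rpow_natCast 2 n).symm
    _ ≤ gscale α n := Real.rpow_le_rpow_of_exponent_le one_le_two h1


lemma perEvent {Ω : Type*} [MeasurableSpace Ω] (P : Measure Ω) [IsProbabilityMeasure P]
    (d : ℕ) (hd : 3 ≤ d) (α : ℝ) (hα0 : 0 < α) (hα1 : α < 1) (L : ℝ → ℝ)
    (τ : (Fin d → ℤ) → Ω → ℝ) (hτ : IsEnv P d α L τ)
    (ε M : ℝ) (hε : 0 < ε) (m : ℕ)
    (n i : ℕ) (x : Fin d → ℤ) (hn1 : 1 ≤ n)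
    (hεg : 1 ≤ ε * gscale α n) (hL : L (ε * gscale α n) ≤ 1)
    (heC : Real.exp 1 * (2^(d+1) * ε^(-α)) ≤ (n:ℝ)) :
    P {ω | (n:ℝ) * max 1 ((2:ℝ)^(i*d) * nuscale d n ^ (d:ℝ) * gscale α n ^ (-α)) <
        ((traps τ α m ε M n ω ∩ cube x ((2:ℝ)^i * nuscale d n)).ncard : ℝ)}
      ≤ ENNReal.ofReal ((Real.exp 1 * (2^(d+1) * ε^(-α)) / n)^n) := by
  have hg0 : (0:ℝ) < gscale α n := Real.rpow_pos_of_pos two_pos _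
  have hgα : gscale α n ^ (-α) = (2:ℝ) ^ (-(n:ℝ)) := by
    rw [gscale, ← Real.rpow_mul (by norm_num)]
    congr 1
    field_simp
  set ν := nuscale d n with hν
  set g := gscale α n with hgdef
  set ℓ : ℝ := (2:ℝ)^i * ν with hℓ
  have hν1 : (1:ℝ) ≤ ν := nuscale_ge_one d n
  have hℓ1 : (1:ℝ) ≤ ℓ := by
    have h1 : (1:ℝ) ≤ (2:ℝ)^i := one_le_pow₀ one_le_two
    nlinarith
  set c : ℤ := ⌊ℓ/2⌋ with hc
  have hc0 : (0:ℤ) ≤ c := Int.floor_nonneg.mpr (by linarith)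
  have hcℓ : (c:ℝ) ≤ ℓ/2 := Int.floor_le _
  set Cfin : Finset (Fin d → ℤ) := Finset.Icc (fun j => x j - c) (fun j => x j + c) with hCfin
  set A : ℝ := max 1 ((2:ℝ)^(i*d) * ν ^ (d:ℝ) * g ^ (-α)) with hA
  have hA1 : (1:ℝ) ≤ A := le_max_left _ _
  set k : ℕ := ⌊(n:ℝ)*A⌋₊ + 1 with hk
  have hnA0 : (0:ℝ) ≤ (n:ℝ)*A := by positivity
  have hnAk : (n:ℝ)*A < k := by
    have := Nat.lt_floor_add_one ((n:ℝ)*A)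
    rw [hk]
    push_cast
    push_cast at this
    linarith
  have hkn : n ≤ k := by
    have h1 : (n:ℝ) ≤ (n:ℝ)*A := le_mul_of_one_le_right (Nat.cast_nonneg n) hA1
    have h2 : (n:ℝ) < (k:ℝ) := lt_of_le_of_lt h1 hnAk
    exact_mod_cast h2.le
  have hk0 : 0 < k := Nat.succ_pos _
  set C : ℝ := 2^(d+1) * ε^(-α) with hCdef
  have hC0 : (0:ℝ) < C := by positivity
  set q : ℝ := ε^(-α) * (2:ℝ)^(-(n:ℝ)) * 2 with hq
  have hq0 : (0:ℝ) ≤ q := by positivity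
  -- step 1 : inclusion into a counting event
  have hsub : {ω | (n:ℝ) * A < ((traps τ α m ε M n ω ∩ cube x ℓ).ncard : ℝ)} ⊆
      {ω | k ≤ (traps τ α m ε M n ω ∩ cube x ℓ).ncard} := by
    intro ω hω
    have hω' : (n:ℝ)*A < ((traps τ α m ε M n ω ∩ cube x ℓ).ncard : ℝ) := hω
    show k ≤ _
    have h2 : (⌊(n:ℝ)*A⌋₊ : ℝ) ≤ (n:ℝ)*A := Nat.floor_le hnA0
    have h3 : (⌊(n:ℝ)*A⌋₊ : ℝ) < ((traps τ α m ε M n ω ∩ cube x ℓ).ncard : ℝ) :=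
      lt_of_le_of_lt h2 hω'
    have h4 : ⌊(n:ℝ)*A⌋₊ < (traps τ α m ε M n ω ∩ cube x ℓ).ncard := by exact_mod_cast h3
    omega
  -- step 2 : counting bound
  have hcount : P {ω | k ≤ (traps τ α m ε M n ω ∩ cube x ℓ).ncard} ≤
      (Cfin.card.choose k) * (ENNReal.ofReal q) ^ k := by
    apply count_tail P τ hτ.indep Cfin (ε * g) k _
    · -- hT
      intro ω y hy
      obtain ⟨hy1, hy2⟩ := hy
      have hy2' : ∀ j, |((y j:ℝ)) - ((x j:ℝ))| ≤ ℓ/2 := hy2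
      rw [hCfin, Finset.coe_Icc]
      refine Set.mem_Icc.mpr ⟨fun j => ?_, fun j => ?_⟩
      · have h5 := (abs_le.mp (hy2' j)).1
        have h6 : ((x j - y j : ℤ):ℝ) ≤ ℓ/2 := by push_cast; linarith
        have h7 : x j - y j ≤ c := Int.le_floor.mpr h6
        show x j - c ≤ y j
        omega
      · have h5 := (abs_le.mp (hy2' j)).2
        have h6 : ((y j - x j : ℤ):ℝ) ≤ ℓ/2 := by push_cast; linarith
        have h7 : y j - x j ≤ c := Int.le_floor.mpr h6
        show y j ≤ x j + c
        omega
    · -- hTu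
      intro ω y hy
      exact hy.1.2.1
    · -- hp
      intro y
      rw [hτ.tail y _ hεg]
      apply ENNReal.ofReal_le_ofReal
      have h8 : (ε * g) ^ (-α) = ε^(-α) * (2:ℝ)^(-(n:ℝ)) := by
        rw [Real.mul_rpow hε.le hg0.le, hgα]
      have h9 : (0:ℝ) ≤ (ε*g)^(-α) := Real.rpow_nonneg (by positivity) _
      calc (ε*g)^(-α) * (1 + L (ε*g)) ≤ (ε*g)^(-α) * 2 := by
            apply mul_le_mul_of_nonneg_left _ h9
            linarith
        _ = q := by rw [h8, hq]
  -- step 3 : numeric bound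
  have hchain : (Cfin.card.choose k : ℝ) * q ^ k ≤ (Real.exp 1 * C / n)^n := by
    have hn0 : (0:ℝ) < n := by exact_mod_cast hn1
    set N := Cfin.card with hN
    have hNcard : (N:ℝ) ≤ (2*ℓ)^d := by
      have h1 : N = ((2*c+1).toNat)^d := by
        calc N = ∏ j : Fin d, (Finset.Icc (x j - c) (x j + c)).card := by
              rw [hN, hCfin]; exact Pi.card_Icc _ _
          _ = ∏ _j : Fin d, (2*c+1).toNat :=
              Finset.prod_congr rfl (fun j _ => by rw [Int.card_Icc]; congr 1; ring)
          _ = (2*c+1).toNat ^ d := by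
              rw [Finset.prod_const, Finset.card_univ, Fintype.card_fin]
      rw [h1]
      push_cast
      apply pow_le_pow_left₀ (by positivity)
      have h2 : (((2*c+1).toNat : ℕ) : ℝ) = 2*(c:ℝ)+1 := by
        have h3 : ((2*c+1).toNat : ℤ) = 2*c+1 := Int.toNat_of_nonneg (by omega)
        exact_mod_cast congrArg (Int.cast : ℤ → ℝ) h3
      rw [h2]
      linarith
    have hΛA : (2*ℓ)^d * q ≤ C * A := by
      have hΛ : ℓ^d * (2:ℝ)^(-(n:ℝ)) = (2:ℝ)^(i*d) * ν^(d:ℝ) * g^(-α) := by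
        rw [hℓ, mul_pow, ← pow_mul, ← Real.rpow_natCast ν d, hgα]
      have hΛle : (2:ℝ)^(i*d) * ν^(d:ℝ) * g^(-α) ≤ A := le_max_right _ _
      have hℓd0 : (0:ℝ) ≤ ℓ^d := by positivity
      calc (2*ℓ)^d * q = (2:ℝ)^(d+1) * ε^(-α) * (ℓ^d * (2:ℝ)^(-(n:ℝ))) := by
            rw [hq, mul_pow]; ring
        _ = C * ((2:ℝ)^(i*d) * ν^(d:ℝ) * g^(-α)) := by rw [hΛ, hCdef]
        _ ≤ C * A := mul_le_mul_of_nonneg_left hΛle hC0.le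
    have hNq : (N:ℝ) * q ≤ C * A := by
      calc (N:ℝ) * q ≤ (2*ℓ)^d * q := mul_le_mul_of_nonneg_right hNcard hq0
        _ ≤ C * A := hΛA
    have hkk : (0:ℝ) < (k:ℝ)^k := by positivity
    have hmain : (N.choose k : ℝ) * q ^ k * (k:ℝ)^k ≤ (Real.exp 1 * C / n)^k * (k:ℝ)^k := by
      have e1 : (0:ℝ) ≤ (N.choose k : ℝ) * q^k := by positivity
      calc (N.choose k : ℝ) * q ^ k * (k:ℝ)^k
          ≤ (N.choose k : ℝ) * q ^ k * (Real.exp k * k.factorial) := by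
            apply mul_le_mul_of_nonneg_left (aux_pow_le_exp_factorial k) e1
        _ = ((N.choose k : ℝ) * (k.factorial:ℝ)) * (q^k * Real.exp k) := by ring
        _ ≤ (N:ℝ)^k * (q^k * Real.exp k) := by
            apply mul_le_mul_of_nonneg_right (aux_choose N k) (by positivity)
        _ = ((N:ℝ) * q * Real.exp 1)^k := by
            rw [hq, ← Real.exp_one_pow]
            ring
        _ ≤ (C * A * Real.exp 1)^k := by
            apply pow_le_pow_left₀ (by positivity)
            apply mul_le_mul_of_nonneg_right hNq (Real.exp_nonneg 1)
        _ ≤ ((Real.exp 1 * C / n) * k)^k := by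
            apply pow_le_pow_left₀ (by positivity)
            rw [div_mul_eq_mul_div, le_div_iff₀ hn0]
            have : (n:ℝ) * A ≤ (k:ℝ) := hnAk.le
            calc C * A * Real.exp 1 * n = Real.exp 1 * C * ((n:ℝ) * A) := by ring
              _ ≤ Real.exp 1 * C * k := by
                  apply mul_le_mul_of_nonneg_left this (by positivity)
              _ = Real.exp 1 * C * k := rfl
        _ = (Real.exp 1 * C / n)^k * (k:ℝ)^k := by rw [mul_pow]
    have h2 : (N.choose k : ℝ) * q ^ k ≤ (Real.exp 1 * C / n)^k :=
      le_of_mul_le_mul_right hmain hkk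
    have h3 : Real.exp 1 * C / n ≤ 1 := by
      rw [div_le_one hn0]; exact heC
    have h4 : (0:ℝ) ≤ Real.exp 1 * C / n := by positivity
    calc (N.choose k:ℝ) * q^k ≤ (Real.exp 1 * C / n)^k := h2
      _ ≤ (Real.exp 1 * C / n)^n := pow_le_pow_of_le_one h4 h3 hkn
  calc P {ω | (n:ℝ) * A < ((traps τ α m ε M n ω ∩ cube x ℓ).ncard : ℝ)}
      ≤ P {ω | k ≤ (traps τ α m ε M n ω ∩ cube x ℓ).ncard} := measure_mono hsub
    _ ≤ (Cfin.card.choose k) * (ENNReal.ofReal q) ^ k := hcount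
    _ = ENNReal.ofReal ((Cfin.card.choose k : ℝ) * q ^ k) := by
        rw [← ENNReal.ofReal_pow hq0, ← ENNReal.ofReal_natCast (Cfin.card.choose k),
          ← ENNReal.ofReal_mul (Nat.cast_nonneg _)]
    _ ≤ ENNReal.ofReal ((Real.exp 1 * C / n)^n) := ENNReal.ofReal_le_ofReal hchain

theorem stmt_6 {Ω : Type*} [MeasurableSpace Ω] (P : Measure Ω) [IsProbabilityMeasure P]
    (d : ℕ) (hd : 3 ≤ d) (α : ℝ) (hα : α ∈ Set.Ioo (0 : ℝ) 1) (L : ℝ → ℝ)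
    (τ : (Fin d → ℤ) → Ω → ℝ) (hτ : IsEnv P d α L τ)
    (ε M : ℝ) (hε : 0 < ε) (hε1 : ε < 1) (hM : 1 < M) (m : ℕ) (hm : 1 ≤ m) :
    ∀ᵐ ω ∂P, ∃ n₀ : ℕ, ∀ n ≥ n₀, ∀ i ≤ imax d n, ∀ x ∈ bigD d m n,
      ((traps τ α m ε M n ω ∩ cube x ((2 : ℝ) ^ i * nuscale d n)).ncard : ℝ)
        ≤ (n : ℝ) * max 1 ((2 : ℝ) ^ (i * d) * nuscale d n ^ (d : ℝ) * gscale α n ^ (-α)) := by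
  obtain ⟨hα0, hα1⟩ := hα
  -- control of the slowly varying correction
  have hLev : ∀ᶠ u in atTop, |L u| < 1 := by
    have h := hτ.decay (Metric.ball_mem_nhds (0:ℝ) one_pos)
    filter_upwards [h] with u hu
    simpa [Real.dist_eq] using hu
  obtain ⟨u₀, hu₀⟩ := eventually_atTop.mp hLev
  set u₁ : ℝ := max u₀ 1 with hu₁
  set C : ℝ := 2^(d+1) * ε^(-α) with hC
  have hC0 : (0:ℝ) < C := by positivity
  set n₂ : ℕ := max (max (⌈u₁/ε⌉₊ + 1) ((3*m)^d)) (max (⌈2^(d+3) * Real.exp 1 * C⌉₊ + 1) 1)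
    with hn₂
  have hP1 : ∀ n, n₂ ≤ n → u₁ ≤ ε * gscale α n := by
    intro n hn
    have h1 : ⌈u₁/ε⌉₊ ≤ n := by omega
    have h2 : u₁/ε ≤ (n:ℝ) := le_trans (Nat.le_ceil _) (by exact_mod_cast h1)
    have h3 : u₁ ≤ ε * n := by rw [div_le_iff₀ hε] at h2; linarith
    have h4 : (n:ℝ) ≤ gscale α n := nat_le_gscale hα0 hα1 n
    calc u₁ ≤ ε * n := h3
      _ ≤ ε * gscale α n := by nlinarith
  have hP2 : ∀ n, n₂ ≤ n → 1 ≤ ε * gscale α n :=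
    fun n hn => le_trans (le_max_right u₀ 1) (hP1 n hn)
  have hP3 : ∀ n, n₂ ≤ n → L (ε * gscale α n) ≤ 1 := by
    intro n hn
    have := hu₀ _ (le_trans (le_max_left u₀ 1) (hP1 n hn))
    exact le_of_lt (abs_lt.mp this).2
  have hP5 : ∀ n, n₂ ≤ n → 1 ≤ n := by intro n hn; omega
  have hP4 : ∀ n, n₂ ≤ n → 2^(d+3) * Real.exp 1 * C ≤ (n:ℝ) := by
    intro n hn
    have h1 : ⌈2^(d+3) * Real.exp 1 * C⌉₊ + 1 ≤ n := by omega
    have h2 : (⌈2^(d+3) * Real.exp 1 * C⌉₊ : ℝ) ≤ n := by exact_mod_cast Nat.le_of_succ_le h1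
    exact le_trans (Nat.le_ceil _) h2
  have hP6 : ∀ n, n₂ ≤ n → Real.exp 1 * C ≤ (n:ℝ) := by
    intro n hn
    refine le_trans ?_ (hP4 n hn)
    have h1 : (1:ℝ) ≤ 2^(d+3) := one_le_pow₀ one_le_two
    nlinarith [mul_pos (Real.exp_pos 1) hC0]
  -- the lattice approximation of the big ball
  set Dfin : ℕ → Finset (Fin d → ℤ) :=
    fun n => Finset.Icc (fun _ => -⌊(m:ℝ)*rscale n⌋) (fun _ => ⌊(m:ℝ)*rscale n⌋) with hDfin
  have hDsub : ∀ n, bigD d m n ⊆ ↑(Dfin n) := by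
    intro n x hx
    have hx' : znorm x ≤ m * rscale n := hx
    rw [hDfin, Finset.coe_Icc]
    refine Set.mem_Icc.mpr ⟨fun j => ?_, fun j => ?_⟩
    · have h1 : -((x j:ℝ)) ≤ m * rscale n := by
        have := coord_le_znorm x j
        have := abs_le.mp (this.trans hx')
        linarith [this.1]
      have h2 : ((-(x j) : ℤ):ℝ) ≤ m * rscale n := by push_cast; linarith
      have h3 : -(x j) ≤ ⌊(m:ℝ)*rscale n⌋ := Int.le_floor.mpr h2
      show -⌊(m:ℝ)*rscale n⌋ ≤ x j
      omega
    · have h1 : ((x j:ℝ)) ≤ m * rscale n := by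
        have := coord_le_znorm x j
        have := abs_le.mp (this.trans hx')
        linarith [this.2]
      show x j ≤ ⌊(m:ℝ)*rscale n⌋
      exact Int.le_floor.mpr h1
  -- the bad events
  set Bad : ℕ → ℕ → (Fin d → ℤ) → Set Ω := fun n i x =>
    {ω | (n:ℝ) * max 1 ((2:ℝ)^(i*d) * nuscale d n ^ (d:ℝ) * gscale α n ^ (-α)) <
      ((traps τ α m ε M n ω ∩ cube x ((2:ℝ)^i * nuscale d n)).ncard : ℝ)} with hBad
  set E : ℕ → Set Ω := fun n =>
    if n₂ ≤ n then ⋃ i ∈ Finset.range (n+1), ⋃ x ∈ Dfin n, Bad n i x else ∅ with hE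
  -- bound on the probability of the bad events
  have hEbound : ∀ n, P (E n) ≤ ENNReal.ofReal ((2⁻¹:ℝ)^n) := by
    intro n
    by_cases hn : n₂ ≤ n
    · have hn0 : (0:ℝ) < n := by exact_mod_cast hP5 n hn
      have hper : ∀ i x, P (Bad n i x) ≤ ENNReal.ofReal ((Real.exp 1 * C / n)^n) :=
        fun i x => perEvent P d hd α hα0 hα1 L τ hτ ε M hε m n i x
          (hP5 n hn) (hP2 n hn) (hP3 n hn) (hP6 n hn)
      have hB0 : (0:ℝ) ≤ (Real.exp 1 * C / n)^n := by positivity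
      have h1 : P (E n) ≤
          (((n+1) * (Dfin n).card : ℕ) : ℝ≥0∞) * ENNReal.ofReal ((Real.exp 1 * C / n)^n) := by
        rw [hE]
        simp only [if_pos hn]
        calc P (⋃ i ∈ Finset.range (n+1), ⋃ x ∈ Dfin n, Bad n i x)
            ≤ ∑ i ∈ Finset.range (n+1), P (⋃ x ∈ Dfin n, Bad n i x) :=
              measure_biUnion_finset_le _ _
          _ ≤ ∑ i ∈ Finset.range (n+1), ∑ x ∈ Dfin n, P (Bad n i x) :=
              Finset.sum_le_sum fun i _ => measure_biUnion_finset_le _ _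
          _ ≤ ∑ _i ∈ Finset.range (n+1), ∑ _x ∈ Dfin n,
                ENNReal.ofReal ((Real.exp 1 * C / n)^n) :=
              Finset.sum_le_sum fun i _ => Finset.sum_le_sum fun x _ => hper i x
          _ = (((n+1) * (Dfin n).card : ℕ) : ℝ≥0∞) *
                ENNReal.ofReal ((Real.exp 1 * C / n)^n) := by
              rw [Finset.sum_const, Finset.sum_const, Finset.card_range, nsmul_eq_mul,
                nsmul_eq_mul]
              push_cast
              ring
      refine le_trans h1 ?_
      rw [← ENNReal.ofReal_natCast, ← ENNReal.ofReal_mul (Nat.cast_nonneg _)]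
      apply ENNReal.ofReal_le_ofReal
      -- the real-number estimate
      have hr1 : (1:ℝ) ≤ rscale n := one_le_two_rpow (by positivity)
      have hmr1 : (1:ℝ) ≤ (m:ℝ) * rscale n := by
        have : (1:ℝ) ≤ (m:ℝ) := by exact_mod_cast hm
        nlinarith
      have hDcard : ((Dfin n).card : ℝ) ≤ (3*(m:ℝ))^d * ((2:ℝ)^d)^n := by
        have h2 : (Dfin n).card = ((2*⌊(m:ℝ)*rscale n⌋+1).toNat)^d := by
          calc (Dfin n).card
              = ∏ j : Fin d, (Finset.Icc (-⌊(m:ℝ)*rscale n⌋) ⌊(m:ℝ)*rscale n⌋).card := by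
                rw [hDfin]; exact Pi.card_Icc _ _
            _ = ∏ _j : Fin d, (2*⌊(m:ℝ)*rscale n⌋+1).toNat :=
                Finset.prod_congr rfl (fun j _ => by rw [Int.card_Icc]; congr 1; ring)
            _ = ((2*⌊(m:ℝ)*rscale n⌋+1).toNat)^d := by
                rw [Finset.prod_const, Finset.card_univ, Fintype.card_fin]
        rw [h2]
        push_cast
        have hfl0 : (0:ℤ) ≤ ⌊(m:ℝ)*rscale n⌋ := Int.floor_nonneg.mpr (by linarith)
        have h3 : (((2*⌊(m:ℝ)*rscale n⌋+1).toNat : ℕ):ℝ) = 2*((⌊(m:ℝ)*rscale n⌋:ℤ):ℝ)+1 := by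
          have h4 : ((2*⌊(m:ℝ)*rscale n⌋+1).toNat : ℤ) = 2*⌊(m:ℝ)*rscale n⌋+1 :=
            Int.toNat_of_nonneg (by omega)
          exact_mod_cast congrArg (Int.cast : ℤ → ℝ) h4
        have h5 : (((2*⌊(m:ℝ)*rscale n⌋+1).toNat : ℕ):ℝ) ≤ 3*((m:ℝ)*rscale n) := by
          rw [h3]
          have := Int.floor_le ((m:ℝ)*rscale n)
          linarith
        calc (((2*⌊(m:ℝ)*rscale n⌋+1).toNat : ℕ):ℝ)^d ≤ (3*((m:ℝ)*rscale n))^d :=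
              pow_le_pow_left₀ (by positivity) h5 d
          _ = (3*(m:ℝ))^d * (rscale n)^d := by ring
          _ ≤ (3*(m:ℝ))^d * ((2:ℝ)^d)^n := by
              apply mul_le_mul_of_nonneg_left _ (by positivity)
              have h6 : (rscale n)^d = (2:ℝ)^(((n:ℝ)/2)*d) := by
                rw [rscale, ← Real.rpow_natCast ((2:ℝ)^((n:ℝ)/2)) d, ← Real.rpow_mul (by norm_num)]
              have h7 : (2:ℝ)^(((n:ℝ)/2)*d) ≤ (2:ℝ)^(((n*d:ℕ)):ℝ) := by
                apply Real.rpow_le_rpow_of_exponent_le one_le_two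
                push_cast
                nlinarith [Nat.cast_nonneg (α := ℝ) n, Nat.cast_nonneg (α := ℝ) d]
              rw [h6]
              calc (2:ℝ)^(((n:ℝ)/2)*d) ≤ (2:ℝ)^(((n*d:ℕ)):ℝ) := h7
                _ = (2:ℝ)^(n*d) := Real.rpow_natCast 2 (n*d)
                _ = ((2:ℝ)^d)^n := by rw [← pow_mul, mul_comm]
      have h3m : (3*(m:ℝ))^d ≤ (2:ℝ)^n := by
        have h8 : (3*m)^d ≤ n₂ := le_trans (Nat.le_max_right _ _) (Nat.le_max_left _ _)
        have h9 : (3*m)^d ≤ 2^n := le_trans (le_trans h8 hn) (Nat.lt_two_pow_self (n := n)).le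
        calc (3*(m:ℝ))^d = (((3*m)^d : ℕ):ℝ) := by push_cast; ring
          _ ≤ ((2^n : ℕ):ℝ) := by exact_mod_cast h9
          _ = (2:ℝ)^n := by push_cast; ring
      have hn1r : ((n:ℝ)+1) ≤ (2:ℝ)^n := by
        have := Nat.lt_two_pow_self (n := n)
        have h10 : (n+1 : ℕ) ≤ 2^n := this
        calc ((n:ℝ)+1) = ((n+1:ℕ):ℝ) := by push_cast; ring
          _ ≤ ((2^n : ℕ):ℝ) := by exact_mod_cast h10
          _ = (2:ℝ)^n := by push_cast; ring
      have hbase : (2:ℝ) * (2 * ((2:ℝ)^d * (Real.exp 1 * C / n))) ≤ 2⁻¹ := by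
        have h11 := hP4 n hn
        have h12 : (2:ℝ) * (2 * ((2:ℝ)^d * (Real.exp 1 * C / n))) =
            (2^(d+2) * (Real.exp 1 * C)) / n := by ring
        rw [h12, div_le_iff₀ hn0]
        have h13 : (2:ℝ)^(d+3) = 2*2^(d+2) := by ring
        rw [h13] at h11
        linarith
      calc ((n+1) * (Dfin n).card : ℕ) * ((Real.exp 1 * C / n)^n)
          ≤ (2:ℝ)^n * ((2:ℝ)^n * ((2:ℝ)^d)^n) * ((Real.exp 1 * C / n)^n) := by
            apply mul_le_mul_of_nonneg_right _ hB0
            push_cast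
            calc ((n:ℝ)+1) * ((Dfin n).card : ℝ)
                ≤ (2:ℝ)^n * ((3*(m:ℝ))^d * ((2:ℝ)^d)^n) := by
                  apply mul_le_mul hn1r hDcard (Nat.cast_nonneg _) (by positivity)
              _ ≤ (2:ℝ)^n * ((2:ℝ)^n * ((2:ℝ)^d)^n) := by
                  apply mul_le_mul_of_nonneg_left _ (by positivity)
                  apply mul_le_mul_of_nonneg_right h3m (by positivity)
        _ = ((2:ℝ) * (2 * ((2:ℝ)^d * (Real.exp 1 * C / n))))^n := by
            rw [mul_pow, mul_pow, mul_pow]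
            ring
        _ ≤ (2⁻¹:ℝ)^n := pow_le_pow_left₀ (by positivity) hbase n
    · rw [hE]
      simp only [if_neg hn]
      simp
  -- Borel–Cantelli
  have hsum : ∑' n, P (E n) ≠ ∞ := by
    apply ne_top_of_le_ne_top _ (ENNReal.tsum_le_tsum hEbound)
    have h13 : ∀ n : ℕ, ENNReal.ofReal ((2⁻¹:ℝ)^n) = (ENNReal.ofReal 2⁻¹)^n :=
      fun n => ENNReal.ofReal_pow (by norm_num) n
    simp only [h13]
    rw [ENNReal.tsum_geometric]
    apply ENNReal.inv_ne_top.mpr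
    have h14 : ENNReal.ofReal 2⁻¹ < 1 := ENNReal.ofReal_lt_one.mpr (by norm_num)
    exact (tsub_pos_iff_lt.mpr h14).ne'
  have hlimsup := measure_limsup_atTop_eq_zero (μ := P) hsum
  have hae : ∀ᵐ ω ∂P, ω ∉ limsup E atTop := by
    rw [ae_iff]
    simpa using hlimsup
  filter_upwards [hae] with ω hω
  have hfreq : ∀ᶠ n in atTop, ω ∉ E n := by
    rw [Filter.mem_limsup_iff_frequently_mem] at hω
    exact Filter.not_frequently.mp hω
  obtain ⟨N₀, hN₀⟩ := eventually_atTop.mp hfreq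
  refine ⟨max N₀ n₂, fun n hn i hi x hx => ?_⟩
  have hn2 : n₂ ≤ n := le_trans (le_max_right N₀ n₂) hn
  have hnot := hN₀ n (le_trans (le_max_left N₀ n₂) hn)
  rw [hE] at hnot
  simp only [if_pos hn2] at hnot
  by_contra hcon
  push_neg at hcon
  apply hnot
  refine Set.mem_iUnion₂.mpr ⟨i, ?_, Set.mem_iUnion₂.mpr ⟨x, hDsub n hx, hcon⟩⟩
  have := imax_le d n hd
  exact Finset.mem_range.mpr (by omega)
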